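/- Let p_u and p_v be probability distributions on [n] and let P* be a local minimizer of the Shannon entropy H(P) = −∑_{i,j} P(i,j) log₂ P(i,j) over the polytope of n×n couplings P of p_u and p_v (i.e., P(i,j) ≥ 0, ∑_j P(i,j) = p_u(i) for all i, ∑_i P(i,j) = p_v(j) for all j). Then P* is quasi-orthogonal: there exist vectors u, v ∈ ℝⁿ such that P*(i,j) = uᵢ vⱼ for every pair (i,j) with P*(i,j) > 0. Equivalently, every local optimum is a masked submatrix of a rank-1 matrix. -/

import Mathlib

/-- `P` is a coupling of the distributions `pu` and `pv` on `[n]`: an `n × n` matrix with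
nonnegative entries, row sums `pu` and column sums `pv`. -/
def IsCoupling {n : ℕ} (pu pv : Fin n → ℝ) (P : Fin n → Fin n → ℝ) : Prop :=
  (∀ i j, 0 ≤ P i j) ∧ (∀ i, ∑ j, P i j = pu i) ∧ (∀ j, ∑ i, P i j = pv j)

/-- Shannon entropy (base 2) of an `n × n` joint distribution matrix. -/
noncomputable def matrixEntropy {n : ℕ} (P : Fin n → Fin n → ℝ) : ℝ :=
  -∑ i, ∑ j, P i j * Real.logb 2 (P i j)

open Real Filter Finset Topology


lemma entropy_eq {n : ℕ} (Q : Fin n → Fin n → ℝ) :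
    matrixEntropy Q = -(∑ p : Fin n × Fin n, Q p.1 p.2 * Real.log (Q p.1 p.2)) / Real.log 2 := by
  unfold matrixEntropy
  rw [Fintype.sum_prod_type, neg_div, neg_inj, Finset.sum_div]
  congr 1; funext i
  rw [Finset.sum_div]
  congr 1; funext j
  rw [Real.logb, mul_div_assoc]

lemma kkt_zero {n : ℕ} {pu pv : Fin n → ℝ} {P : Fin n → Fin n → ℝ}
    (hP : IsCoupling pu pv P)
    (hloc : IsLocalMinOn matrixEntropy {Q | IsCoupling pu pv Q} P)
    (d : Fin n → Fin n → ℝ)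
    (hrow : ∀ i, ∑ j, d i j = 0) (hcol : ∀ j, ∑ i, d i j = 0)
    (hsupp : ∀ i j, P i j = 0 → d i j = 0) : d = 0 := by
  by_contra hd
  obtain ⟨i0, hi0⟩ : ∃ i, d i ≠ 0 := by
    by_contra h; push_neg at h; exact hd (funext h)
  obtain ⟨j0, hj0⟩ : ∃ j, d i0 j ≠ 0 := by
    by_contra h; push_neg at h; exact hi0 (funext h)
  haveI : Nonempty (Fin n) := ⟨i0⟩
  have hPpos : ∀ i j, d i j ≠ 0 → 0 < P i j := by
    intro i j h
    rcases (hP.1 i j).lt_or_eq with h' | h'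
    · exact h'
    · exact absurd (hsupp i j h'.symm) h
  set c : ℝ := (Finset.univ : Finset (Fin n × Fin n)).inf'
      Finset.univ_nonempty
      (fun p => if d p.1 p.2 = 0 then 1 else P p.1 p.2 / |d p.1 p.2|) with hc_def
  have hc : 0 < c := by
    rw [hc_def, Finset.lt_inf'_iff]
    intro p _
    by_cases h : d p.1 p.2 = 0
    · simp [h]
    · simp only [h, if_false]
      exact div_pos (hPpos _ _ h) (abs_pos.mpr h)
  have hle : ∀ i j, d i j ≠ 0 → c ≤ P i j / |d i j| := by
    intro i j h
    have := Finset.inf'_le (b := (i, j))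
      (fun p : Fin n × Fin n => if d p.1 p.2 = 0 then 1 else P p.1 p.2 / |d p.1 p.2|)
      (Finset.mem_univ _)
    simpa [h, ← hc_def] using this
  have hbound : ∀ ε : ℝ, |ε| ≤ c → ∀ i j, d i j ≠ 0 → |ε * d i j| ≤ P i j := by
    intro ε hε i j h
    have h1 : (0:ℝ) < |d i j| := abs_pos.mpr h
    rw [abs_mul]
    calc |ε| * |d i j| ≤ c * |d i j| := by nlinarith
      _ ≤ (P i j / |d i j|) * |d i j| := by nlinarith [hle i j h]
      _ = P i j := by field_simp
  have hnn : ∀ ε : ℝ, |ε| ≤ c → ∀ i j, 0 ≤ P i j + ε * d i j := by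
    intro ε hε i j
    by_cases h : d i j = 0
    · simpa [h] using hP.1 i j
    · have := hbound ε hε i j h
      have := neg_abs_le (ε * d i j)
      linarith
  have hpos : ∀ ε : ℝ, |ε| < c → ∀ i j, d i j ≠ 0 → 0 < P i j + ε * d i j := by
    intro ε hε i j h
    have h1 : (0:ℝ) < |d i j| := abs_pos.mpr h
    have h2 : |ε * d i j| < c * |d i j| := by rw [abs_mul]; exact mul_lt_mul_of_pos_right hε h1
    have h3 : c * |d i j| ≤ P i j := by
      calc c * |d i j| ≤ (P i j / |d i j|) * |d i j| := by nlinarith [hle i j h]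
        _ = P i j := by field_simp
    have := neg_abs_le (ε * d i j)
    linarith
  set γ : ℝ → Fin n → Fin n → ℝ := fun ε i j => P i j + ε * d i j with hγ_def
  have hcoup : ∀ ε : ℝ, |ε| ≤ c → IsCoupling pu pv (γ ε) := by
    intro ε hε
    refine ⟨hnn ε hε, fun i => ?_, fun j => ?_⟩
    · rw [Finset.sum_add_distrib, ← Finset.mul_sum, hrow i, mul_zero, add_zero]
      exact hP.2.1 i
    · rw [Finset.sum_add_distrib, ← Finset.mul_sum, hcol j, mul_zero, add_zero]
      exact hP.2.2 j
  have hγ0 : γ 0 = P := by funext i j; simp [hγ_def]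
  have hcont : Continuous γ := by
    apply continuous_pi; intro i; apply continuous_pi; intro j
    exact continuous_const.add (continuous_id.mul continuous_const)
  have htend : Tendsto γ (𝓝[Set.Ioo (-c) c] 0) (𝓝[{Q | IsCoupling pu pv Q}] P) := by
    rw [tendsto_nhdsWithin_iff]
    constructor
    · rw [← hγ0]
      exact (hcont.tendsto 0).mono_left nhdsWithin_le_nhds
    · filter_upwards [eventually_mem_nhdsWithin] with ε hε
      exact hcoup ε (le_of_lt (abs_lt.mpr ⟨hε.1, hε.2⟩))
  have hev : ∀ᶠ ε in 𝓝[Set.Ioo (-c) c] (0:ℝ),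
      matrixEntropy P ≤ matrixEntropy (γ ε) := htend.eventually hloc
  rw [eventually_nhdsWithin_iff, Metric.eventually_nhds_iff] at hev
  obtain ⟨δ, hδ, hev⟩ := hev
  set ε0 : ℝ := min (δ / 2) (c / 2) with hε0_def
  have hε0 : 0 < ε0 := lt_min (by linarith) (by linarith)
  have hε0c : ε0 < c := lt_of_le_of_lt (min_le_right _ _) (by linarith)
  have hε0δ : ε0 < δ := lt_of_le_of_lt (min_le_left _ _) (by linarith)
  have habs : |ε0| < c := by rw [abs_of_pos hε0]; exact hε0c
  have habs' : |(-ε0)| < c := by rwa [abs_neg]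
  have hA : matrixEntropy P ≤ matrixEntropy (γ ε0) := by
    apply hev
    · rw [Real.dist_eq, sub_zero, abs_of_pos hε0]; exact hε0δ
    · exact ⟨by linarith, hε0c⟩
  have hB : matrixEntropy P ≤ matrixEntropy (γ (-ε0)) := by
    apply hev
    · rw [Real.dist_eq, sub_zero, abs_neg, abs_of_pos hε0]; exact hε0δ
    · constructor <;> [linarith; linarith]
  -- strict convexity
  set g : ℝ → ℝ := fun x => x * Real.log x with hg_def
  have hterm : ∀ p : Fin n × Fin n,
      g (P p.1 p.2) ≤ (g (γ ε0 p.1 p.2) + g (γ (-ε0) p.1 p.2)) / 2 := by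
    intro p
    by_cases h : d p.1 p.2 = 0
    · simp only [hγ_def, h, mul_zero, add_zero]
      linarith
    · have ha : 0 < γ ε0 p.1 p.2 := hpos ε0 habs p.1 p.2 h
      have hb : 0 < γ (-ε0) p.1 p.2 := hpos (-ε0) habs' p.1 p.2 h
      have hne : γ ε0 p.1 p.2 ≠ γ (-ε0) p.1 p.2 := by
        simp only [hγ_def]
        intro he
        have : ε0 * d p.1 p.2 = -ε0 * d p.1 p.2 := by linarith
        have : d p.1 p.2 = 0 := by nlinarith
        exact h this
      have := Real.strictConvexOn_mul_log.2 (le_of_lt ha) (le_of_lt hb) hne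
        (by norm_num : (0:ℝ) < 1/2) (by norm_num : (0:ℝ) < 1/2) (by norm_num)
      have hmid : (1/2 : ℝ) • γ ε0 p.1 p.2 + (1/2 : ℝ) • γ (-ε0) p.1 p.2 = P p.1 p.2 := by
        simp only [smul_eq_mul, hγ_def]; ring
      rw [hmid] at this
      simp only [smul_eq_mul] at this
      simp only [hg_def]
      linarith [this]
  have hterm_strict : g (P i0 j0) < (g (γ ε0 i0 j0) + g (γ (-ε0) i0 j0)) / 2 := by
    have ha : 0 < γ ε0 i0 j0 := hpos ε0 habs i0 j0 hj0
    have hb : 0 < γ (-ε0) i0 j0 := hpos (-ε0) habs' i0 j0 hj0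
    have hne : γ ε0 i0 j0 ≠ γ (-ε0) i0 j0 := by
      simp only [hγ_def]
      intro he
      have : ε0 * d i0 j0 = -ε0 * d i0 j0 := by linarith
      have : d i0 j0 = 0 := by nlinarith
      exact hj0 this
    have := Real.strictConvexOn_mul_log.2 (le_of_lt ha) (le_of_lt hb) hne
      (by norm_num : (0:ℝ) < 1/2) (by norm_num : (0:ℝ) < 1/2) (by norm_num)
    have hmid : (1/2 : ℝ) • γ ε0 i0 j0 + (1/2 : ℝ) • γ (-ε0) i0 j0 = P i0 j0 := by
      simp only [smul_eq_mul, hγ_def]; ring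
    rw [hmid] at this
    simp only [smul_eq_mul] at this
    simp only [hg_def]
    linarith [this]
  have hsum : (∑ p : Fin n × Fin n, g (P p.1 p.2)) <
      ((∑ p : Fin n × Fin n, g (γ ε0 p.1 p.2)) + (∑ p : Fin n × Fin n, g (γ (-ε0) p.1 p.2))) / 2 := by
    have h1 : (∑ p : Fin n × Fin n, g (P p.1 p.2)) <
        ∑ p : Fin n × Fin n, (g (γ ε0 p.1 p.2) + g (γ (-ε0) p.1 p.2)) / 2 := by
      apply Finset.sum_lt_sum (fun p _ => hterm p)
      exact ⟨(i0, j0), Finset.mem_univ _, hterm_strict⟩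
    calc (∑ p : Fin n × Fin n, g (P p.1 p.2)) <
        ∑ p : Fin n × Fin n, (g (γ ε0 p.1 p.2) + g (γ (-ε0) p.1 p.2)) / 2 := h1
      _ = _ := by rw [← Finset.sum_div, Finset.sum_add_distrib]
  have hlog2 : (0:ℝ) < Real.log 2 := Real.log_pos (by norm_num)
  rw [entropy_eq, entropy_eq (γ ε0)] at hA
  rw [entropy_eq, entropy_eq (γ (-ε0))] at hB
  rw [div_le_div_iff_of_pos_right hlog2] at hA hB
  simp only [neg_le_neg_iff] at hA hB
  -- hA : ∑ g (γ ε0) ≤ ∑ g P, hB similarly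
  simp only [hg_def] at hsum hA hB
  linarith

/-- **Local minima of the minimum entropy coupling problem are quasi-orthogonal.**
Let `pu, pv` be probability distributions on `[n]` and let `P*` be a local minimizer of
the Shannon entropy `H(P) = -∑_{i,j} P(i,j) log₂ P(i,j)` over the polytope of `n × n`
couplings of `pu` and `pv`.  Then `P*` is quasi-orthogonal: there exist vectors
`u, v ∈ ℝⁿ` with `P*(i,j) = uᵢ vⱼ` for every pair `(i,j)` with `P*(i,j) > 0`; equivalently,
`P*` is a masked submatrix of a rank-1 matrix. -/
theorem local_min_entropy_coupling_quasi_orthogonal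
    (n : ℕ) (pu pv : Fin n → ℝ)
    (hpu0 : ∀ i, 0 ≤ pu i) (hpusum : ∑ i, pu i = 1)
    (hpv0 : ∀ j, 0 ≤ pv j) (hpvsum : ∑ j, pv j = 1)
    (P : Fin n → Fin n → ℝ)
    (hP : IsCoupling pu pv P)
    (hloc : IsLocalMinOn matrixEntropy {Q | IsCoupling pu pv Q} P) :
    ∃ u v : Fin n → ℝ, ∀ i j, 0 < P i j → P i j = u i * v j := by
  have hkkt : ∀ d : Fin n → Fin n → ℝ, (∀ i, ∑ j, d i j = 0) → (∀ j, ∑ i, d i j = 0) →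
      (∀ i j, P i j = 0 → d i j = 0) → d = 0 := fun d h1 h2 h3 => kkt_zero hP hloc d h1 h2 h3
  classical
  set T : ((Fin n → ℝ) × (Fin n → ℝ)) →ₗ[ℝ] EuclideanSpace ℝ (Fin n × Fin n) :=
    { toFun := fun ab => (WithLp.toLp 2 (fun p : Fin n × Fin n => if 0 < P p.1 p.2 then ab.1 p.1 + ab.2 p.2 else 0) :
        EuclideanSpace ℝ (Fin n × Fin n))
      map_add' := by
        intro x y; ext p
        by_cases h : 0 < P p.1 p.2 <;> simp [h] <;> ring
      map_smul' := by
        intro m x; ext p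
        by_cases h : 0 < P p.1 p.2 <;> simp [h] <;> ring } with hT_def
  set y : EuclideanSpace ℝ (Fin n × Fin n) :=
    WithLp.toLp 2 (fun p : Fin n × Fin n => if 0 < P p.1 p.2 then Real.log (P p.1 p.2) else 0) with hy_def
  have hy : y ∈ LinearMap.range T := by
    rw [← Submodule.orthogonal_orthogonal (LinearMap.range T)]
    rw [Submodule.mem_orthogonal]
    intro x hx
    rw [Submodule.mem_orthogonal] at hx
    -- d = masked x
    set d : Fin n → Fin n → ℝ := fun i j => if 0 < P i j then x (i, j) else 0 with hd_def
    have hinner : ∀ a b : Fin n → ℝ,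
        ∑ p : Fin n × Fin n, (if 0 < P p.1 p.2 then a p.1 + b p.2 else 0) * x p = 0 := by
      intro a b
      have := hx (T (a, b)) (LinearMap.mem_range_self T (a, b))
      simpa [PiLp.inner_apply, RCLike.inner_apply, hT_def, mul_comm] using this
    have hrow : ∀ i, ∑ j, d i j = 0 := by
      intro i0
      have h1 := hinner (fun i => if i = i0 then 1 else 0) 0
      rw [Fintype.sum_prod_type] at h1
      have h2 : ∀ i : Fin n, (∑ j : Fin n,
          (if 0 < P i j then (if i = i0 then (1:ℝ) else 0) + (0 : Fin n → ℝ) j else 0) * x (i, j))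
          = if i = i0 then ∑ j, d i j else 0 := by
        intro i
        by_cases h : i = i0
        · subst h
          simp only [if_pos rfl, Pi.zero_apply, add_zero]
          apply Finset.sum_congr rfl
          intro j _
          by_cases hp : 0 < P i j <;> simp [hp, hd_def]
        · simp only [h, if_false, Pi.zero_apply, add_zero]
          apply Finset.sum_eq_zero
          intro j _
          by_cases hp : 0 < P i j <;> simp [hp]
      rw [Finset.sum_congr rfl (fun i _ => h2 i)] at h1
      simpa using h1
    have hcol : ∀ j, ∑ i, d i j = 0 := by
      intro j0
      have h1 := hinner 0 (fun j => if j = j0 then 1 else 0)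
      rw [Fintype.sum_prod_type] at h1
      have h2 : ∀ i : Fin n, (∑ j : Fin n,
          (if 0 < P i j then (0 : Fin n → ℝ) i + (if j = j0 then (1:ℝ) else 0) else 0) * x (i, j))
          = d i j0 := by
        intro i
        rw [Finset.sum_eq_single j0]
        · by_cases hp : 0 < P i j0 <;> simp [hp, hd_def]
        · intro j _ hj
          by_cases hp : 0 < P i j <;> simp [hp, hj]
        · simp
      rw [Finset.sum_congr rfl (fun i _ => h2 i)] at h1
      exact h1
    have hsupp : ∀ i j, P i j = 0 → d i j = 0 := by
      intro i j h
      simp [hd_def, h]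
    have hd0 : d = 0 := hkkt d hrow hcol hsupp
    have hx0 : ∀ p : Fin n × Fin n, 0 < P p.1 p.2 → x p = 0 := by
      intro p hp
      have := congrFun (congrFun hd0 p.1) p.2
      simpa [hd_def, hp] using this
    -- inner product x y = 0
    rw [PiLp.inner_apply]
    apply Finset.sum_eq_zero
    intro p _
    by_cases hp : 0 < P p.1 p.2
    · simp [hx0 p hp]
    · simp [hy_def, hp]
  obtain ⟨⟨a, b⟩, hab⟩ := hy
  refine ⟨fun i => Real.exp (a i), fun j => Real.exp (b j), fun i j hij => ?_⟩
  have := congrArg (fun z : EuclideanSpace ℝ (Fin n × Fin n) => z (i, j)) hab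
  simp only [hT_def, hy_def, LinearMap.coe_mk, AddHom.coe_mk, PiLp.toLp_apply, if_pos hij] at this
  rw [← Real.exp_add, this, Real.exp_log hij]
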